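/- Let s ≥ 1, 1 ≤ s' ≤ s, k ≥ 1 and D ≥ k. For r = 1, …, s' let Q^(r) = (Q^(r)_0, Q^(r)_1, …, Q^(r)_s) be a nonzero tuple of coefficient vectors with Q^(r)_0 ∈ F^D and Q^(r)_l ∈ F^(D−k+1) for 1 ≤ l ≤ s. With weight vector w = (0, k−1, …, k−1) ∈ ℕ^(s+1), define the w-weighted degree of Q^(r) as the maximum over components l = 0, 1, …, s of (deg Q^(r)_l + w_l), where deg of a coefficient vector is the largest index of a nonzero entry (−∞ for the zero vector), and define the leading position LP(Q^(r)) as the largest component index attaining this maximum. Suppose LP(Q^(r)) = j_r with j_1, …, j_(s') pairwise distinct elements of {1, …, s}. Then the number of tuples (f^(1), …, f^(s)) ∈ (F^k)^s satisfying Q^(r)_0 + Σ_(l=1)^s Q^(r)_l ∗ f^(l) = 0 (as coefficient sequences) for all r = 1, …, s' is at most q^(m·k·(s−s')). -/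

import Mathlib

namespace Stmt10

/-- Coefficient vector regarded as a coefficient sequence supported in degrees `< d`. -/
def toSeq {F : Type} [Field F] {d : ℕ} (v : Fin d → F) : ℕ → F :=
  fun u => if h : u < d then v ⟨u, h⟩ else 0

/-- Skew product of coefficient sequences: `(g ∗ h)_w = Σ_{u+v=w} g_u · σ^u(h_v)`. -/
def skewMulSeq {F : Type} [Field F] (σ : F ≃+* F) (g h : ℕ → F) : ℕ → F :=
  fun w => ∑ u ∈ Finset.range (w + 1), g u * (⇑σ)^[u] (h (w - u))

/-- Degree of a coefficient vector: largest index of a nonzero entry (`⊥` = `−∞` for `0`). -/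
def degV {F : Type} [Field F] [DecidableEq F] {d : ℕ} (v : Fin d → F) : WithBot ℕ :=
  Finset.univ.sup fun u : Fin d => if v u = 0 then (⊥ : WithBot ℕ) else ((u : ℕ) : WithBot ℕ)

/-- `w`-weighted degree of the components of a tuple `(Q_0, Q_1, …, Q_s)` with
`w = (0, k−1, …, k−1)`: component `0` gets weight `0`, components `1, …, s` weight `k−1`. -/
def wdeg {F : Type} [Field F] [DecidableEq F] {D dk s : ℕ} (k : ℕ)
    (Q0 : Fin D → F) (Qp : Fin s → Fin dk → F) : Fin (s + 1) → WithBot ℕ :=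
  Fin.cases (degV Q0) fun l => degV (Qp l) + ((k - 1 : ℕ) : WithBot ℕ)

set_option linter.unusedSectionVars false

section Aux

variable {F : Type} [Field F] [DecidableEq F]

lemma wb_le_cancel {a b : WithBot ℕ} {n : ℕ}
    (h : a + (n : WithBot ℕ) ≤ b + (n : WithBot ℕ)) : a ≤ b :=
  (WithBot.add_le_add_iff_right (by exact_mod_cast WithBot.coe_ne_bot)).1 h

lemma iter_zero (σ : F ≃+* F) (u : ℕ) : (⇑σ)^[u] 0 = 0 :=
  Function.iterate_fixed (map_zero σ) u

lemma iter_sub (σ : F ≃+* F) (u : ℕ) (a b : F) :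
    (⇑σ)^[u] (a - b) = (⇑σ)^[u] a - (⇑σ)^[u] b := by
  induction u with
  | zero => simp
  | succ n ih => simp [Function.iterate_succ_apply', ih, map_sub]

lemma iter_ne_zero (σ : F ≃+* F) (u : ℕ) {a : F} (ha : a ≠ 0) : (⇑σ)^[u] a ≠ 0 := by
  intro h
  exact ha ((σ.injective.iterate u) (h.trans (iter_zero σ u).symm))

lemma toSeq_sub {d : ℕ} (a b : Fin d → F) :
    toSeq (a - b) = toSeq a - toSeq b := by
  funext u
  simp only [toSeq, Pi.sub_apply]
  split <;> simp

lemma toSeq_zero {d : ℕ} : toSeq (0 : Fin d → F) = 0 := by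
  funext u; simp only [toSeq]; split <;> simp

lemma skewMulSeq_sub (σ : F ≃+* F) (g h1 h2 : ℕ → F) :
    skewMulSeq σ g (h1 - h2) = skewMulSeq σ g h1 - skewMulSeq σ g h2 := by
  funext w
  simp [skewMulSeq, iter_sub, mul_sub, Finset.sum_sub_distrib]

lemma skewMulSeq_zero_right (σ : F ≃+* F) (g : ℕ → F) :
    skewMulSeq σ g 0 = 0 := by
  funext w; simp [skewMulSeq, iter_zero]

lemma skewMulSeq_zero_left (σ : F ≃+* F) (h : ℕ → F) :
    skewMulSeq σ 0 h = 0 := by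
  funext w; simp [skewMulSeq]

lemma degV_eq_bot_iff {d : ℕ} (v : Fin d → F) : degV v = ⊥ ↔ v = 0 := by
  rw [degV, Finset.sup_eq_bot_iff]
  constructor
  · intro h; funext u
    have := h u (Finset.mem_univ u)
    simp only [Pi.zero_apply]
    by_contra hu
    simp [hu] at this
  · intro h u _; simp [h]

lemma degV_spec {d : ℕ} (v : Fin d → F) (hv : v ≠ 0) :
    ∃ e : ℕ, ∃ he : e < d, degV v = (e : WithBot ℕ) ∧ v ⟨e, he⟩ ≠ 0 ∧
      ∀ u : ℕ, e < u → toSeq v u = 0 := by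
  have hne : (Finset.univ.filter fun u : Fin d => v u ≠ 0).Nonempty := by
    by_contra h
    rw [Finset.not_nonempty_iff_eq_empty, Finset.filter_eq_empty_iff] at h
    apply hv; funext u
    simpa using h (Finset.mem_univ u)
  set T := Finset.univ.filter fun u : Fin d => v u ≠ 0 with hT
  set e0 := T.max' hne with he0
  have he0mem : e0 ∈ T := T.max'_mem hne
  have he0nz : v e0 ≠ 0 := (Finset.mem_filter.1 he0mem).2
  refine ⟨(e0 : ℕ), e0.isLt, ?_, by simpa using he0nz, ?_⟩
  · apply le_antisymm
    · apply Finset.sup_le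
      intro u _
      by_cases hu : v u = 0
      · simp [hu]
      · have hm : u ∈ T := Finset.mem_filter.2 ⟨Finset.mem_univ u, hu⟩
        have := T.le_max' u hm
        simp only [hu, if_false]
        exact_mod_cast this
    · have := Finset.le_sup (f := fun u : Fin d =>
        if v u = 0 then (⊥ : WithBot ℕ) else ((u : ℕ) : WithBot ℕ)) (Finset.mem_univ e0)
      simp only [he0nz, if_false] at this
      exact this
  · intro u hu
    simp only [toSeq]
    split
    · rename_i h
      by_contra hvu
      have hm : (⟨u, h⟩ : Fin d) ∈ T := Finset.mem_filter.2 ⟨Finset.mem_univ _, hvu⟩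
      have := T.le_max' _ hm
      rw [← he0] at this
      have : u ≤ (e0 : ℕ) := this
      omega
    · rfl

lemma skew_high (σ : F ≃+* F) (g h : ℕ → F) {e d N : ℕ}
    (hg : ∀ u, e < u → g u = 0) (hh : ∀ v, d < v → h v = 0) (hN : e + d < N) :
    skewMulSeq σ g h N = 0 := by
  apply Finset.sum_eq_zero
  intro u hu
  rw [Finset.mem_range] at hu
  by_cases h1 : e < u
  · rw [hg u h1, zero_mul]
  · have : d < N - u := by omega
    rw [hh _ this, iter_zero, mul_zero]

lemma skew_top (σ : F ≃+* F) (g h : ℕ → F) {e d : ℕ}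
    (hg : ∀ u, e < u → g u = 0) (hh : ∀ v, d < v → h v = 0) :
    skewMulSeq σ g h (e + d) = g e * (⇑σ)^[e] (h d) := by
  rw [skewMulSeq]
  rw [Finset.sum_eq_single_of_mem e (Finset.mem_range.2 (by omega))]
  · have hed : e + d - e = d := by omega
    rw [hed]
  · intro b hb hbe
    rw [Finset.mem_range] at hb
    by_cases h1 : e < b
    · rw [hg b h1, zero_mul]
    · have : d < e + d - b := by omega
      rw [hh _ this, iter_zero, mul_zero]

/-- Key injectivity lemma: a tuple `h` supported on the leading positions which satisfies the
homogeneous system must be zero. -/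
lemma key_lemma (σ : F ≃+* F) {s s' k dk : ℕ}
    (Qp : Fin s' → Fin s → Fin dk → F)
    (π : Fin s' → Fin s)
    (hQnz : ∀ r, Qp r (π r) ≠ 0)
    (hdeg : ∀ r l, degV (Qp r l) ≤ degV (Qp r (π r)))
    (hlt : ∀ r l, degV (Qp r l) = degV (Qp r (π r)) → l ≤ π r)
    (h : Fin s → Fin k → F)
    (hsupp : ∀ l, (∀ r, π r ≠ l) → h l = 0)
    (hsol : ∀ r, ∑ l : Fin s, skewMulSeq σ (toSeq (Qp r l)) (toSeq (h l)) = 0) :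
    h = 0 := by
  by_contra hne
  have hSne : (Finset.univ.filter fun r : Fin s' => h (π r) ≠ 0).Nonempty := by
    have hex : ∃ l, h l ≠ 0 := by
      by_contra hc
      push_neg at hc
      exact hne (funext fun l => hc l)
    obtain ⟨l, hl⟩ := hex
    have hex2 : ∃ r, π r = l := by
      by_contra hc
      push_neg at hc
      exact hl (hsupp l hc)
    obtain ⟨r, hr⟩ := hex2
    exact ⟨r, Finset.mem_filter.2 ⟨Finset.mem_univ _, hr ▸ hl⟩⟩
  set S := Finset.univ.filter fun r : Fin s' => h (π r) ≠ 0 with hS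
  set dh : Fin s' → ℕ := fun r => (degV (h (π r))).unbotD 0 with hdh
  obtain ⟨r1, hr1S, hr1max⟩ := S.exists_max_image dh hSne
  have hS'ne : (S.filter fun r => dh r = dh r1).Nonempty :=
    ⟨r1, Finset.mem_filter.2 ⟨hr1S, rfl⟩⟩
  obtain ⟨rs, hrsS', hrsmin⟩ := (S.filter fun r => dh r = dh r1).exists_min_image π hS'ne
  have hrsS : rs ∈ S := (Finset.mem_filter.1 hrsS').1
  have hrsdh : dh rs = dh r1 := (Finset.mem_filter.1 hrsS').2
  have hrsnz : h (π rs) ≠ 0 := by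
    have := (Finset.mem_filter.1 hrsS).2
    simpa using this
  obtain ⟨d, hdlt, hdeq, hdnz, hdvan⟩ := degV_spec (h (π rs)) hrsnz
  obtain ⟨e, helt, heeq, henz, hevan⟩ := degV_spec (Qp rs (π rs)) (hQnz rs)
  have hdhrs : dh rs = d := by
    show WithBot.unbotD 0 (degV (h (π rs))) = d
    rw [hdeq]; rfl
  have heval := congrFun (hsol rs) (e + d)
  rw [Finset.sum_apply, Pi.zero_apply] at heval
  rw [Finset.sum_eq_single_of_mem (π rs) (Finset.mem_univ _)] at heval
  · rw [skew_top σ _ _ hevan hdvan] at heval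
    have hge : toSeq (Qp rs (π rs)) e = Qp rs (π rs) ⟨e, helt⟩ := dif_pos helt
    have hhd : toSeq (h (π rs)) d = h (π rs) ⟨d, hdlt⟩ := dif_pos hdlt
    rw [hge, hhd] at heval
    exact mul_ne_zero henz (iter_ne_zero σ e hdnz) heval
  · intro l _ hlne
    by_cases hl0 : h l = 0
    · rw [hl0, toSeq_zero, skewMulSeq_zero_right]; rfl
    · have hex : ∃ r', π r' = l := by
        by_contra hc
        push_neg at hc
        exact hl0 (hsupp l hc)
      obtain ⟨r', hr'⟩ := hex
      have hr'S : r' ∈ S := Finset.mem_filter.2 ⟨Finset.mem_univ _, hr' ▸ hl0⟩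
      by_cases hQ0 : Qp rs l = 0
      · rw [hQ0, toSeq_zero, skewMulSeq_zero_left]; rfl
      · obtain ⟨e', he'lt, he'eq, he'nz, he'van⟩ := degV_spec (Qp rs l) hQ0
        obtain ⟨d', hd'lt, hd'eq, hd'nz, hd'van⟩ := degV_spec (h l) hl0
        have he'le : e' ≤ e := by
          have := hdeg rs l
          rw [he'eq, heeq] at this
          exact_mod_cast this
        have hdh' : dh r' = d' := by
          show WithBot.unbotD 0 (degV (h (π r'))) = d'
          rw [hr', hd'eq]; rfl
        have hd'le : d' ≤ d := by
          have := hr1max r' hr'S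
          omega
        by_cases hlow : e' + d' < e + d
        · exact skew_high σ _ _ he'van hd'van hlow
        · exfalso
          have hee : e' = e := by omega
          have hdd : d' = d := by omega
          have hdve : degV (Qp rs l) = degV (Qp rs (π rs)) := by
            rw [he'eq, heeq, hee]
          have hlle : l ≤ π rs := hlt rs l hdve
          have hr'S' : r' ∈ S.filter fun r => dh r = dh r1 :=
            Finset.mem_filter.2 ⟨hr'S, by omega⟩
          have := hrsmin r' hr'S'
          rw [hr'] at this
          exact hlne (le_antisymm hlle this)

end Aux

theorem root_finding_count_le
    {K F : Type} [Field K] [Field F] [Algebra K F] [Fintype K] [Fintype F] [DecidableEq F]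
    (σ : F ≃+* F)
    (hfix : ∀ x : F, σ x = x ↔ x ∈ Set.range (algebraMap K F))
    {q m : ℕ} (hq : Fintype.card K = q) (hm : Module.finrank K F = m)
    {s s' k D : ℕ} (hs : 1 ≤ s) (hs' : 1 ≤ s') (hs's : s' ≤ s) (hk : 1 ≤ k) (hD : k ≤ D)
    (Q0 : Fin s' → Fin D → F) (Qp : Fin s' → Fin s → Fin (D - k + 1) → F)
    (hnz : ∀ r : Fin s', ¬ (Q0 r = 0 ∧ ∀ l : Fin s, Qp r l = 0))
    (jm : Fin s' → Fin (s + 1))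
    (hj0 : ∀ r, jm r ≠ 0)
    (hjinj : Function.Injective jm)
    (hLP : ∀ r : Fin s',
      (∀ l : Fin (s + 1), wdeg k (Q0 r) (Qp r) l ≤ wdeg k (Q0 r) (Qp r) (jm r)) ∧
      (∀ l : Fin (s + 1), wdeg k (Q0 r) (Qp r) l = wdeg k (Q0 r) (Qp r) (jm r) → l ≤ jm r)) :
    Nat.card {f : Fin s → Fin k → F //
        ∀ r : Fin s',
          toSeq (Q0 r) + ∑ l : Fin s, skewMulSeq σ (toSeq (Qp r l)) (toSeq (f l))
            = (0 : ℕ → F)}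
      ≤ q ^ (m * k * (s - s')) := by
  classical
  set π : Fin s' → Fin s := fun r => (jm r).pred (hj0 r) with hπdef
  have hjm : ∀ r, jm r = (π r).succ := fun r => (Fin.succ_pred (jm r) (hj0 r)).symm
  have hπinj : Function.Injective π := by
    intro a b hab
    apply hjinj
    rw [hjm a, hjm b, hab]
  have hwsucc : ∀ (r : Fin s') (l : Fin s),
      wdeg k (Q0 r) (Qp r) l.succ = degV (Qp r l) + ((k - 1 : ℕ) : WithBot ℕ) := by
    intro r l; simp [wdeg]
  have hw0 : ∀ r : Fin s', wdeg k (Q0 r) (Qp r) 0 = degV (Q0 r) := by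
    intro r; simp [wdeg]
  have hQnz : ∀ r, Qp r (π r) ≠ 0 := by
    intro r h0
    apply hnz r
    have hbot : wdeg k (Q0 r) (Qp r) (jm r) = ⊥ := by
      rw [hjm r, hwsucc, (degV_eq_bot_iff _).2 h0]
      exact WithBot.bot_add _
    constructor
    · have h1 := (hLP r).1 0
      rw [hbot, hw0 r, le_bot_iff] at h1
      exact (degV_eq_bot_iff _).1 h1
    · intro l
      have h1 := (hLP r).1 l.succ
      rw [hbot, hwsucc r l, le_bot_iff, WithBot.add_eq_bot] at h1
      rcases h1 with h1 | h1
      · exact (degV_eq_bot_iff _).1 h1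
      · exact absurd h1 (by exact_mod_cast WithBot.coe_ne_bot)
  have hdeg : ∀ r l, degV (Qp r l) ≤ degV (Qp r (π r)) := by
    intro r l
    have h1 := (hLP r).1 l.succ
    rw [hjm r, hwsucc, hwsucc] at h1
    exact wb_le_cancel h1
  have hlt : ∀ r l, degV (Qp r l) = degV (Qp r (π r)) → l ≤ π r := by
    intro r l hdv
    have heq : wdeg k (Q0 r) (Qp r) l.succ = wdeg k (Q0 r) (Qp r) (jm r) := by
      rw [hjm r, hwsucc, hwsucc, hdv]
    have h1 := (hLP r).2 l.succ heq
    rw [hjm r] at h1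
    exact Fin.succ_le_succ_iff.1 h1
  set J : Finset (Fin s) := Finset.image π Finset.univ with hJ
  have hinj : Function.Injective
      (fun f : {f : Fin s → Fin k → F //
        ∀ r : Fin s',
          toSeq (Q0 r) + ∑ l : Fin s, skewMulSeq σ (toSeq (Qp r l)) (toSeq (f l))
            = (0 : ℕ → F)} => (fun l : {l : Fin s // l ∈ Jᶜ} => f.1 l.1)) := by
    rintro ⟨f, hf⟩ ⟨g, hg⟩ hfg
    simp only at hfg
    have hdiff : (fun l => f l - g l) = 0 := by
      apply key_lemma σ Qp π hQnz hdeg hlt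
      · intro l hl
        have hlJ : l ∈ Jᶜ := by
          rw [Finset.mem_compl, hJ]
          intro hmem
          obtain ⟨r, _, hr⟩ := Finset.mem_image.1 hmem
          exact hl r hr
        have := congrFun hfg ⟨l, hlJ⟩
        simp only at this
        rw [this]
        exact sub_self _
      · intro r
        have hsum : ∑ l : Fin s, skewMulSeq σ (toSeq (Qp r l)) (toSeq (f l))
            = ∑ l : Fin s, skewMulSeq σ (toSeq (Qp r l)) (toSeq (g l)) :=
          add_left_cancel ((hf r).trans (hg r).symm)
        calc ∑ l : Fin s, skewMulSeq σ (toSeq (Qp r l)) (toSeq (f l - g l))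
            = ∑ l : Fin s, (skewMulSeq σ (toSeq (Qp r l)) (toSeq (f l))
              - skewMulSeq σ (toSeq (Qp r l)) (toSeq (g l))) := by
              refine Finset.sum_congr rfl fun l _ => ?_
              rw [toSeq_sub, skewMulSeq_sub]
          _ = ∑ l : Fin s, skewMulSeq σ (toSeq (Qp r l)) (toSeq (f l))
              - ∑ l : Fin s, skewMulSeq σ (toSeq (Qp r l)) (toSeq (g l)) :=
              Finset.sum_sub_distrib _ _
          _ = 0 := by rw [hsum, sub_self]
    apply Subtype.ext
    funext l i
    have := congrFun (congrFun hdiff l) i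
    simp only [Pi.sub_apply, Pi.zero_apply] at this
    exact sub_eq_zero.1 this
  have hcard := Nat.card_le_card_of_injective _ hinj
  have hJcard : J.card = s' := by
    rw [hJ, Finset.card_image_of_injective _ hπinj, Finset.card_univ, Fintype.card_fin]
  have hJc : (Jᶜ).card = s - s' := by
    rw [Finset.card_compl, hJcard, Fintype.card_fin]
  have hF : Fintype.card F = q ^ m := by
    rw [← hq, ← hm]
    exact Module.card_eq_pow_finrank
  refine hcard.trans ?_
  rw [Nat.card_eq_fintype_card]
  rw [Fintype.card_fun]
  rw [Fintype.card_fun, Fintype.card_fin, hF]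
  have : Fintype.card {l : Fin s // l ∈ Jᶜ} = s - s' := by
    rw [Fintype.card_coe, hJc]
  rw [this, ← pow_mul, ← pow_mul, mul_assoc]

end Stmt10
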